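/- arXiv:1709.04431 — 2 statements merged into one kernel-verified Lean document; each statement's English description precedes it below -/
import Mathlib

section
/- Let X be a finite pure n-dimensional weighted simplicial complex with n > 1 such that the 1-skeleton of X and the 1-skeletons of all links of X of dimension > 0 are connected. Fix 0 ≤ k ≤ n−2. If there are real numbers κ ≥ λ > 0 such that ⋃_{σ ∈ Σ(k)} Spec(Δ^+_{σ,0}) \ {0} ⊆ [λ, κ], then ⋃_{τ ∈ Σ(k−1)} Spec(Δ^+_{τ,0}) \ {0} ⊆ [2 − 1/λ, 2 − 1/κ]. -/
open Finset

variable {V : Type} [Fintype V] [DecidableEq V]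

/-- A finite abstract simplicial complex on the vertex type `V`. -/
structure SComplex (V : Type) [Fintype V] [DecidableEq V] where
  faces : Finset (Finset V)
  empty_mem : ∅ ∈ faces
  down_closed : ∀ s ∈ faces, ∀ t, t ⊆ s → t ∈ faces

namespace SComplex

/-- `X` is pure `n`-dimensional: every face is contained in an `n`-dimensional face. -/
def Pure (X : SComplex V) (n : ℕ) : Prop :=
  (∀ s ∈ X.faces, s.card ≤ n + 1) ∧
    ∀ s ∈ X.faces, ∃ t ∈ X.faces, s ⊆ t ∧ t.card = n + 1

/-- `σ` is an ordered simplex with `j` vertices (an element of `Σ(j-1)`). -/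
def IsOSimp (X : SComplex V) {j : ℕ} (σ : Fin j → V) : Prop :=
  Function.Injective σ ∧ Finset.image σ Finset.univ ∈ X.faces

instance {j : ℕ} (X : SComplex V) (σ : Fin j → V) : Decidable (X.IsOSimp σ) := by
  unfold IsOSimp; infer_instance

/-- A balanced, strictly positive weight function on the simplices of `X`. -/
def IsBalanced (X : SComplex V) (n : ℕ) (m : Finset V → ℝ) : Prop :=
  (∀ s ∈ X.faces, 0 < m s) ∧
    ∀ s ∈ X.faces, s.card ≤ n →
      m s = ∑ t ∈ X.faces.filter fun t => s ⊆ t ∧ t.card = s.card + 1, m t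

/-- The weight of an ordered tuple (zero off the ordered simplices). -/
noncomputable def wt (X : SComplex V) (m : Finset V → ℝ) {j : ℕ} (σ : Fin j → V) : ℝ :=
  if X.IsOSimp σ then m (Finset.image σ Finset.univ) else 0

/-- `φ` is a `j`-vertex form, i.e. an element of `C^{j-1}(X,ℝ)`:
antisymmetric and supported on the ordered simplices. -/
def IsForm (X : SComplex V) (j : ℕ) (φ : (Fin j → V) → ℝ) : Prop :=
  (∀ (σ : Fin j → V) (π : Equiv.Perm (Fin j)),
      φ (σ ∘ π) = ((Equiv.Perm.sign π : ℤ) : ℝ) * φ σ) ∧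
    ∀ σ : Fin j → V, ¬X.IsOSimp σ → φ σ = 0

/-- The inner product on `j`-vertex forms (`C^{j-1}(X,ℝ)`). -/
noncomputable def innerF (X : SComplex V) (m : Finset V → ℝ) (j : ℕ)
    (φ ψ : (Fin j → V) → ℝ) : ℝ :=
  ∑ σ : Fin j → V, X.wt m σ / (Nat.factorial j : ℝ) * (φ σ * ψ σ)

/-- The sum of a quantity over all ordered simplices with `j` vertices. -/
noncomputable def sumOSimp (X : SComplex V) (j : ℕ) (F : (Fin j → V) → ℝ) : ℝ :=
  ∑ σ : Fin j → V, if X.IsOSimp σ then F σ else 0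

/-- The simplicial differential `d`. -/
def dOp {j : ℕ} (φ : (Fin j → V) → ℝ) : (Fin (j + 1) → V) → ℝ :=
  fun σ => ∑ i : Fin (j + 1), (-1 : ℝ) ^ (i : ℕ) * φ (σ ∘ i.succAbove)

/-- The codifferential `δ` (the adjoint of `d`). -/
noncomputable def deltaOp (X : SComplex V) (m : Finset V → ℝ) {j : ℕ}
    (φ : (Fin (j + 1) → V) → ℝ) : (Fin j → V) → ℝ :=
  fun τ => ∑ v : V, X.wt m (Fin.cons v τ) / X.wt m τ * φ (Fin.cons v τ)

/-- The upper Laplacian `Δ⁺` on `j`-vertex forms (`C^{j-1}`). -/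
noncomputable def lapPlus (X : SComplex V) (m : Finset V → ℝ) (j : ℕ)
    (φ : (Fin j → V) → ℝ) : (Fin j → V) → ℝ :=
  X.deltaOp m (dOp φ)

/-- The lower Laplacian `Δ⁻` on `(j+1)`-vertex forms (`C^j`). -/
noncomputable def lapMinus (X : SComplex V) (m : Finset V → ℝ) (j : ℕ)
    (φ : (Fin (j + 1) → V) → ℝ) : (Fin (j + 1) → V) → ℝ :=
  dOp (X.deltaOp m φ)

/-- The set of eigenvalues of `Δ⁺` on `j`-vertex forms. -/
def specLapPlus (X : SComplex V) (m : Finset V → ℝ) (j : ℕ) : Set ℝ :=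
  {μ | ∃ φ : (Fin j → V) → ℝ, X.IsForm j φ ∧ φ ≠ 0 ∧ X.lapPlus m j φ = μ • φ}

/-- The set of eigenvalues of `Δ⁻` on `(j+1)`-vertex forms (`C^j`). -/
def specLapMinus (X : SComplex V) (m : Finset V → ℝ) (j : ℕ) : Set ℝ :=
  {μ | ∃ φ : (Fin (j + 1) → V) → ℝ, X.IsForm (j + 1) φ ∧ φ ≠ 0 ∧ X.lapMinus m j φ = μ • φ}

/-- The link of a face `s`. -/
def link (X : SComplex V) (s : Finset V) : SComplex V where
  faces := insert ∅ (X.faces.filter fun t => Disjoint s t ∧ s ∪ t ∈ X.faces)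
  empty_mem := Finset.mem_insert_self _ _
  down_closed := by
    intro a ha t hts
    rcases Finset.mem_insert.mp ha with h | h
    · refine Finset.mem_insert.mpr (Or.inl ?_)
      subst h; exact Finset.subset_empty.mp hts
    · rw [Finset.mem_filter] at h
      refine Finset.mem_insert.mpr (Or.inr (Finset.mem_filter.mpr
        ⟨X.down_closed a h.1 t hts, Disjoint.mono_right hts h.2.1,
          X.down_closed _ h.2.2 _ (Finset.union_subset_union (Finset.Subset.refl s) hts)⟩))

/-- The induced (balanced) weight on the link of `s`. -/
def linkWt (m : Finset V → ℝ) (s : Finset V) : Finset V → ℝ := fun t => m (s ∪ t)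

/-- The graph given by the 1-skeleton of `X`. -/
def skeleton (X : SComplex V) : SimpleGraph V where
  Adj u v := u ≠ v ∧ ({u, v} : Finset V) ∈ X.faces
  symm := by
    constructor
    intro u v h
    exact ⟨h.1.symm, by rw [Finset.pair_comm]; exact h.2⟩
  loopless := ⟨fun u h => h.1 rfl⟩

/-- The 1-skeleton of `X` is connected (on the vertices of `X`). -/
def SkelConnected (X : SComplex V) : Prop :=
  ∀ u v : V, ({u} : Finset V) ∈ X.faces → ({v} : Finset V) ∈ X.faces →
    X.skeleton.Reachable u v

/-- The 1-skeleton of `X` and the 1-skeletons of all links of `X` of dimension `> 0`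
are connected. -/
def AllLinksConnected (X : SComplex V) (n : ℕ) : Prop :=
  X.SkelConnected ∧ ∀ s ∈ X.faces, s.card < n → (X.link s).SkelConnected

/-- The localization `φ_τ ∈ C⁰(X_τ)` of a `(k+1)`-vertex form `φ` at an ordered
`k`-vertex simplex `τ`. -/
def localize {k : ℕ} (φ : (Fin (k + 1) → V) → ℝ) (τ : Fin k → V) : (Fin 1 → V) → ℝ :=
  fun σ => φ (Fin.append τ σ)

/-- The restriction of a cochain to the subcomplex `Y` (truncating off `Y`). -/
def restrict (Y : SComplex V) {j : ℕ} (φ : (Fin j → V) → ℝ) : (Fin j → V) → ℝ :=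
  fun σ => if Y.IsOSimp σ then φ σ else 0

/-- `S` is an `(n+1)`-partition of `X`: the vertices of `X` are partitioned into the
sides `S i`, and every edge joins two distinct sides. -/
def IsPartition (X : SComplex V) (n : ℕ) (S : Fin (n + 1) → Finset V) : Prop :=
  (∀ i, ∀ v ∈ S i, ({v} : Finset V) ∈ X.faces) ∧
    (∀ v : V, ({v} : Finset V) ∈ X.faces → ∃! i, v ∈ S i) ∧
    ∀ u v : V, u ≠ v → ({u, v} : Finset V) ∈ X.faces → ∀ i, u ∈ S i → v ∉ S i

/-- The side differential `d_{(k,j)}` with respect to the side `S`. -/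
def dSide (S : Finset V) {j : ℕ} (φ : (Fin j → V) → ℝ) : (Fin (j + 1) → V) → ℝ :=
  fun σ => ∑ i : Fin (j + 1),
    if σ i ∈ S then (-1 : ℝ) ^ (i : ℕ) * φ (σ ∘ i.succAbove) else 0

/-- The adjoint `δ_{(k,j)}` of the side differential. -/
noncomputable def deltaSide (X : SComplex V) (m : Finset V → ℝ) (S : Finset V) {j : ℕ}
    (φ : (Fin (j + 1) → V) → ℝ) : (Fin j → V) → ℝ :=
  fun τ => ∑ v ∈ S, X.wt m (Fin.cons v τ) / X.wt m τ * φ (Fin.cons v τ)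

/-- The side lower Laplacian `Δ⁻_{(k,j)}` on `(j+1)`-vertex forms (`C^j`). -/
noncomputable def lapMinusSide (X : SComplex V) (m : Finset V → ℝ) (S : Finset V) (j : ℕ)
    (φ : (Fin (j + 1) → V) → ℝ) : (Fin (j + 1) → V) → ℝ :=
  dSide S (X.deltaSide m S φ)

end SComplex

open SComplex
open scoped RealInnerProductSpace

section SpecAux

lemma specC {E : Type} [NormedAddCommGroup E] [InnerProductSpace ℝ E] [FiniteDimensional ℝ E]
    (T : E →ₗ[ℝ] E) (hT : T.IsSymmetric) (g : E) (lam kap : ℝ) (hlam : 0 < lam)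
    (hlk : lam ≤ kap)
    (heig : ∀ (μ : ℝ) (h : E), h ≠ 0 → T h = μ • h → μ = 0 ∨ (lam ≤ μ ∧ μ ≤ kap))
    (hker : ∀ h : E, T h = 0 → ∃ c : ℝ, h = c • g) :
    (∀ h : E, ⟪T h, h⟫ ≤ kap * ⟪h, h⟫) ∧
      (∀ h : E, ⟪h, g⟫ = 0 → lam * ⟪h, h⟫ ≤ ⟪T h, h⟫) := by
  classical
  have hrank : Module.finrank ℝ E = Module.finrank ℝ E := rfl
  set b := hT.eigenvectorBasis hrank with hb
  set μ := hT.eigenvalues hrank with hμ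
  have heigvec : ∀ i, T (b i) = μ i • b i := by
    intro i
    have := hT.apply_eigenvectorBasis hrank i
    rw [hb, hμ]
    exact_mod_cast this
  have hinner : ∀ h h' : E, ⟪h, h'⟫ = ∑ i, (b.repr h i) * (b.repr h' i) := by
    intro h h'
    rw [← OrthonormalBasis.sum_inner_mul_inner b h h']
    congr 1; funext i
    rw [b.repr_apply_apply, b.repr_apply_apply, real_inner_comm h (b i)]
  have hrepr : ∀ (h : E) i, b.repr (T h) i = μ i * b.repr h i := by
    intro h i
    exact hT.eigenvectorBasis_apply_self_apply hrank h i
  have hTh : ∀ h : E, ⟪T h, h⟫ = ∑ i, μ i * (b.repr h i)^2 := by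
    intro h
    rw [hinner]
    congr 1; funext i
    rw [hrepr]; ring
  have hμi : ∀ i, μ i = 0 ∨ (lam ≤ μ i ∧ μ i ≤ kap) := by
    intro i
    refine heig (μ i) (b i) (b.toBasis.ne_zero i) (heigvec i)
  constructor
  · intro h
    rw [hTh, hinner, Finset.mul_sum]
    apply Finset.sum_le_sum
    intro i _
    rcases hμi i with h0 | ⟨h1, h2⟩ <;> nlinarith [sq_nonneg (b.repr h i)]
  · intro h horth
    rw [hTh, hinner, Finset.mul_sum]
    apply Finset.sum_le_sum
    intro i _
    rcases hμi i with h0 | ⟨h1, h2⟩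
    · have hbi : T (b i) = 0 := by rw [heigvec i, h0, zero_smul]
      obtain ⟨c, hc⟩ := hker (b i) hbi
      have h3 : b.repr h i = 0 := by
        rw [b.repr_apply_apply, hc, inner_smul_left]
        have hg : ⟪g, h⟫ = 0 := by rw [real_inner_comm]; exact horth
        simp [hg]
      rw [h3, h0]; simp
    · nlinarith [sq_nonneg (b.repr h i)]

lemma lemD {V : Type} [Fintype V] (a : V → V → ℝ) (hasym : ∀ u v, a u v = a v u)
    (g : V → ℝ) :
    2 * (∑ u, ∑ v, a u v * (g u - g v) * g u) = ∑ u, ∑ v, a u v * (g u - g v) ^ 2 := by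
  have h1 : (∑ u, ∑ v, a u v * (g u - g v) * g u)
      = ∑ u, ∑ v, a v u * (g v - g u) * g v := Finset.sum_comm
  have h2 : (∑ u, ∑ v, a v u * (g v - g u) * g v)
      = ∑ u, ∑ v, a u v * (g v - g u) * g v := by
    refine Finset.sum_congr rfl fun u _ => Finset.sum_congr rfl fun v _ => by rw [hasym u v]
  calc 2 * (∑ u, ∑ v, a u v * (g u - g v) * g u)
      = (∑ u, ∑ v, a u v * (g u - g v) * g u)
        + (∑ u, ∑ v, a u v * (g v - g u) * g v) := by rw [← h2, ← h1]; ring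
    _ = ∑ u, (∑ v, a u v * (g u - g v) * g u + ∑ v, a u v * (g v - g u) * g v) := by
        rw [← Finset.sum_add_distrib]
    _ = ∑ u, ∑ v, (a u v * (g u - g v) * g u + a u v * (g v - g u) * g v) := by
        refine Finset.sum_congr rfl fun u _ => ?_; rw [← Finset.sum_add_distrib]
    _ = ∑ u, ∑ v, a u v * (g u - g v) ^ 2 := by
        refine Finset.sum_congr rfl fun u _ => Finset.sum_congr rfl fun v _ => by ring

lemma sum_subtypeP {V : Type} [Fintype V] (P : V → Prop) [DecidablePred P] (F : V → ℝ)
    (hF : ∀ u, ¬P u → F u = 0) : ∑ u : {x // P x}, F u.val = ∑ u, F u := by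
  rw [← Finset.sum_filter_of_ne (s := Finset.univ) (p := P)
    (fun x _ hx => by by_contra h; exact hx (hF x h))]
  exact (Finset.sum_subtype (Finset.univ.filter P) (by simp) F).symm
lemma lemB {V : Type} [Fintype V] [DecidableEq V] (P : V → Prop) [DecidablePred P]
    (w : V → ℝ) (a : V → V → ℝ) (lam kap : ℝ) (hlam : 0 < lam) (hlk : lam ≤ kap)
    (hw : ∀ u, P u → 0 < w u)
    (hasym : ∀ u v, a u v = a v u)
    (hann : ∀ u v, 0 ≤ a u v)
    (hasupp : ∀ u v, a u v ≠ 0 → P u ∧ P v)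
    (hdeg : ∀ u, P u → w u = ∑ v, a u v)
    (hconn : ∀ u v, P u → P v → Relation.ReflTransGen (fun x y => a x y ≠ 0) u v)
    (hspec : ∀ (μ : ℝ) (g : V → ℝ), g ≠ 0 → (∀ u, ¬P u → g u = 0) →
      (∀ u, P u → ∑ v, a u v * (g u - g v) = μ * (w u * g u)) →
      μ = 0 ∨ (lam ≤ μ ∧ μ ≤ kap)) :
    (∀ g : V → ℝ, (∀ u, ¬P u → g u = 0) →
        ∑ u, ∑ v, a u v * (g u - g v) * g u ≤ kap * ∑ u, w u * g u ^ 2) ∧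
      (∀ g : V → ℝ, (∀ u, ¬P u → g u = 0) → (∑ u, w u * g u = 0) →
        lam * ∑ u, w u * g u ^ 2 ≤ ∑ u, ∑ v, a u v * (g u - g v) * g u) := by
  classical
  set W := {x : V // P x}
  set E := EuclideanSpace ℝ W with hE
  have hsq : ∀ u : W, 0 < Real.sqrt (w u) := fun u => Real.sqrt_pos.mpr (hw u u.2)
  set s : W → ℝ := fun u => Real.sqrt (w u) with hs
  have hsqw : ∀ u : W, s u * s u = w u := fun u => Real.mul_self_sqrt (hw u u.2).le
  set M : Matrix W W ℝ := fun u x => (if u = x then (1 : ℝ) else 0) - a u x / (s u * s x)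
    with hM
  have hMherm : M.IsHermitian := by
    unfold Matrix.IsHermitian
    ext u x
    simp only [Matrix.conjTranspose_apply, star_trivial]
    simp only [hM]
    rw [hasym x u, mul_comm (s x) (s u)]
    congr 1
    simp [eq_comm]
  set T : E →ₗ[ℝ] E := Matrix.toEuclideanLin M with hT
  have hTsym : T.IsSymmetric := Matrix.isHermitian_iff_isSymmetric.mp hMherm
  have hTapp : ∀ (h : E) (u : W), T h u = h u - ∑ x : W, a u x / (s u * s x) * h x := by
    intro h u
    have h1 : T h u = ∑ x : W, M u x * h x := rfl
    rw [h1]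
    simp only [hM, sub_mul, ite_mul, one_mul, zero_mul]
    rw [Finset.sum_sub_distrib, Finset.sum_ite_eq (Finset.univ : Finset W) u (fun x => h x)]
    simp
  have hEip : ∀ h h' : E, ⟪h, h'⟫ = ∑ u : W, h u * h' u := by
    intro h h'
    rw [PiLp.inner_apply]
    simp [RCLike.inner_apply]
    exact Finset.sum_congr rfl fun _ _ => mul_comm _ _
  set toE : (V → ℝ) → E := fun g => WithLp.toLp 2 (fun u : W => s u * g u.val) with htoE
  set g0 : E := WithLp.toLp 2 (fun u : W => s u) with hg0
  have hkey : ∀ (u : W) (g : V → ℝ),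
      (∑ x : W, a u x / (s u * s x) * (s x * g x)) * s u = ∑ x : W, a u x * g x := by
    intro u g
    rw [Finset.sum_mul]
    refine Finset.sum_congr rfl fun x _ => ?_
    have hsu : s u ≠ 0 := (hsq u).ne'
    have hsx : s x ≠ 0 := (hsq x).ne'
    field_simp
  have hsubW : ∀ F : V → ℝ, (∀ u, ¬P u → F u = 0) → ∑ u : W, F u.val = ∑ u, F u :=
    fun F hF => sum_subtypeP P F hF
  -- inner product transfers
  have hipN : ∀ g : V → ℝ, (∀ u, ¬P u → g u = 0) →
      ⟪toE g, toE g⟫ = ∑ u, w u * g u ^ 2 := by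
    intro g hg
    rw [hEip]
    rw [← hsubW (fun u => w u * g u ^ 2) (fun u hu => by simp [hg u hu])]
    refine Finset.sum_congr rfl fun u _ => ?_
    simp only [htoE]
    rw [← hsqw u]; ring
  have hip0 : ∀ g : V → ℝ, (∀ u, ¬P u → g u = 0) →
      ⟪toE g, g0⟫ = ∑ u, w u * g u := by
    intro g hg
    rw [hEip]
    rw [← hsubW (fun u => w u * g u) (fun u hu => by simp [hg u hu])]
    refine Finset.sum_congr rfl fun u _ => ?_
    simp only [htoE, hg0]
    rw [← hsqw u]; ring
  -- Dirichlet form transfer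
  have hipT : ∀ g : V → ℝ, (∀ u, ¬P u → g u = 0) →
      ⟪T (toE g), toE g⟫ = ∑ u, ∑ v, a u v * (g u - g v) * g u := by
    intro g hg
    rw [hEip]
    have hterm : ∀ u : W, T (toE g) u * toE g u
        = w u * g u ^ 2 - (∑ x : W, a u x * g x) * g u := by
      intro u
      rw [hTapp]
      simp only [htoE]
      have expand : (s u * g u.val - ∑ x : W, a u x / (s u * s x) * (s x * g x.val))
            * (s u * g u.val)
          = (s u * g u.val) * (s u * g u.val)
            - ((∑ x : W, a u x / (s u * s x) * (s x * g x.val)) * s u) * g u.val := by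
        ring
      rw [expand, hkey u g]
      congr 1
      rw [← hsqw u]; ring
    rw [Finset.sum_congr rfl fun u _ => hterm u, Finset.sum_sub_distrib]
    have hA : (∑ u : W, w u.val * g u.val ^ 2) = ∑ u, ∑ v, a u v * g u * g u := by
      rw [hsubW (fun u => w u * g u ^ 2) (fun u hu => by simp [hg u hu])]
      refine Finset.sum_congr rfl fun u _ => ?_
      by_cases hu : P u
      · rw [hdeg u hu, Finset.sum_mul]
        refine Finset.sum_congr rfl fun v _ => by ring
      · simp [hg u hu]
    have hB : (∑ u : W, (∑ x : W, a u.val x.val * g x.val) * g u.val)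
        = ∑ u, ∑ v, a u v * g v * g u := by
      have inner_eq : ∀ u : V, (∑ x : W, a u x.val * g x.val) = ∑ v, a u v * g v := by
        intro u
        exact hsubW (fun v => a u v * g v) (fun v hv => by simp [hg v hv])
      rw [Finset.sum_congr rfl fun (u : W) _ => by rw [inner_eq u.val]]
      rw [hsubW (fun u => (∑ v, a u v * g v) * g u) (fun u hu => by simp [hg u hu])]
      refine Finset.sum_congr rfl fun u _ => by rw [Finset.sum_mul]
    rw [hA, hB, ← Finset.sum_sub_distrib]
    refine Finset.sum_congr rfl fun u _ => ?_
    rw [← Finset.sum_sub_distrib]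
    refine Finset.sum_congr rfl fun v _ => by ring
  -- from E to supported functions
  have hfromE : ∀ h : E, ∃ g : V → ℝ, (∀ u, ¬P u → g u = 0) ∧ toE g = h ∧
      (h ≠ 0 → g ≠ 0) := by
    intro h
    refine ⟨fun u => if hu : P u then h ⟨u, hu⟩ / s ⟨u, hu⟩ else 0,
      fun u hu => by simp [hu], ?_, ?_⟩
    · ext u
      simp only [htoE, u.2, dif_pos]
      rw [mul_comm, div_mul_cancel₀]
      exact (hsq u).ne'
    · intro hne hgz
      apply hne
      ext u
      have h2 := congrFun hgz u.val
      simp only [u.2, dif_pos, Pi.zero_apply] at h2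
      rcases div_eq_zero_iff.mp h2 with h1 | h1
      · exact h1
      · exact absurd h1 (hsq u).ne'
  have hEV : ∀ (μ : ℝ) (h : E), T h = μ • h →
      ∀ g : V → ℝ, (∀ u, ¬P u → g u = 0) → toE g = h →
      ∀ u, P u → ∑ v, a u v * (g u - g v) = μ * (w u * g u) := by
    intro μ h hTh g hg hgh u hu
    set uu : W := ⟨u, hu⟩ with huu
    have hW : T h uu = μ * h uu := by rw [hTh]; rfl
    rw [hTapp] at hW
    subst hgh
    simp only [htoE] at hW
    have e1 : (s uu * g u - ∑ x : W, a uu x / (s uu * s x) * (s x * g x)) * s uu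
        = w u * g u - ∑ x : W, a uu x * g x := by
      rw [sub_mul]
      congr 1
      · rw [← hsqw uu]; ring
      · exact hkey uu g
    have e2 : (μ * (s uu * g u)) * s uu = μ * (w u * g u) := by
      rw [← hsqw uu]; ring
    have h5 : w u * g u - (∑ x : W, a uu x * g x) = μ * (w u * g u) := by
      rw [← e1, ← e2, hW]
    have e3 : ∑ v, a u v * (g u - g v) = w u * g u - ∑ v, a u v * g v := by
      rw [Finset.sum_congr rfl fun v _ => (mul_sub (a u v) (g u) (g v) : _)]
      rw [Finset.sum_sub_distrib]
      congr 1
      rw [← Finset.sum_mul, ← hdeg u hu]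
    have e4 : (∑ v, a u v * g v) = ∑ x : W, a uu x * g x :=
      (hsubW (fun v => a u v * g v) (fun v hv => by simp [hg v hv])).symm
    rw [e3, e4, h5]
  have heig : ∀ (μ : ℝ) (h : E), h ≠ 0 → T h = μ • h → μ = 0 ∨ (lam ≤ μ ∧ μ ≤ kap) := by
    intro μ h hne hTh
    obtain ⟨g, hgsupp, hgh, hgne⟩ := hfromE h
    exact hspec μ g (hgne hne) hgsupp (hEV μ h hTh g hgsupp hgh)
  have hker : ∀ h : E, T h = 0 → ∃ c : ℝ, h = c • g0 := by
    intro h hTh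
    obtain ⟨g, hgsupp, hgh, _⟩ := hfromE h
    have hTh0 : T h = (0 : ℝ) • h := by rw [zero_smul]; exact hTh
    have hEV0 := hEV 0 h hTh0 g hgsupp hgh
    have hQ0 : ∑ u, ∑ v, a u v * (g u - g v) * g u = 0 := by
      refine Finset.sum_eq_zero fun u _ => ?_
      by_cases hu : P u
      · rw [← Finset.sum_mul, hEV0 u hu]
        ring
      · refine Finset.sum_eq_zero fun v _ => by rw [hgsupp u hu]; ring
    have hQ : ∑ u, ∑ v, a u v * (g u - g v) ^ 2 = 0 := by
      rw [← lemD a hasym g, hQ0]; ring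
    have hzero : ∀ u v, a u v ≠ 0 → g u = g v := by
      intro u v hauv
      have hnn : ∀ x ∈ (Finset.univ : Finset V), 0 ≤ ∑ y, a x y * (g x - g y) ^ 2 :=
        fun x _ => Finset.sum_nonneg fun y _ => mul_nonneg (hann x y) (sq_nonneg _)
      have h1 := (Finset.sum_eq_zero_iff_of_nonneg hnn).mp hQ u (Finset.mem_univ u)
      have hnn2 : ∀ y ∈ (Finset.univ : Finset V), 0 ≤ a u y * (g u - g y) ^ 2 :=
        fun y _ => mul_nonneg (hann u y) (sq_nonneg _)
      have h2 := (Finset.sum_eq_zero_iff_of_nonneg hnn2).mp h1 v (Finset.mem_univ v)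
      rcases mul_eq_zero.mp h2 with h3 | h3
      · exact absurd h3 hauv
      · have := pow_eq_zero_iff (n := 2) (by norm_num) |>.mp h3
        linarith [sub_eq_zero.mp this]
    by_cases hex : ∃ u : V, P u
    · obtain ⟨u₀, hu₀⟩ := hex
      have hconst' : ∀ v, Relation.ReflTransGen (fun x y => a x y ≠ 0) u₀ v → g v = g u₀ := by
        intro v hrel
        induction hrel with
        | refl => rfl
        | tail _ hbv ih => exact (hzero _ _ hbv).symm.trans ih
      have hconst : ∀ v, P v → g v = g u₀ := fun v hv => hconst' v (hconn u₀ v hu₀ hv)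
      refine ⟨g u₀, ?_⟩
      ext u
      have : h u = s u * g u.val := by rw [← hgh]
      rw [this, hconst u.val u.2]
      show s u * g u₀ = g u₀ * g0 u
      simp only [hg0]
      ring
    · refine ⟨0, ?_⟩
      ext u
      exact absurd ⟨u.val, u.2⟩ hex
  obtain ⟨hupper, hlower⟩ := specC T hTsym g0 lam kap hlam hlk heig hker
  constructor
  · intro g hg
    have h1 := hupper (toE g)
    rw [hipT g hg, hipN g hg] at h1
    exact h1
  · intro g hg horth
    have h0 : ⟪toE g, g0⟫ = 0 := by rw [hip0 g hg]; exact horth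
    have h1 := hlower (toE g) h0
    rw [hipT g hg, hipN g hg] at h1
    exact h1

end SpecAux

/-- the singleton tuple -/
def eV (u : V) : Fin 1 → V := fun _ => u

lemma eV_eq (σ : Fin 1 → V) : σ = eV (σ 0) := by
  funext i
  have : i = 0 := Subsingleton.elim i 0
  rw [this]; rfl

lemma image1 (σ : Fin 1 → V) : Finset.image σ Finset.univ = {σ 0} := by
  rw [show (Finset.univ : Finset (Fin 1)) = {0} from rfl, Finset.image_singleton]

lemma isosimp1 (Z : SComplex V) (σ : Fin 1 → V) :
    Z.IsOSimp σ ↔ ({σ 0} : Finset V) ∈ Z.faces := by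
  unfold SComplex.IsOSimp
  rw [image1]
  exact ⟨fun h => h.2, fun h => ⟨Function.injective_of_subsingleton σ, h⟩⟩

lemma wt1 (Z : SComplex V) (mZ : Finset V → ℝ) (σ : Fin 1 → V) :
    Z.wt mZ σ = if ({σ 0} : Finset V) ∈ Z.faces then mZ {σ 0} else 0 := by
  unfold SComplex.wt
  rw [image1]
  by_cases h : ({σ 0} : Finset V) ∈ Z.faces
  · rw [if_pos ((isosimp1 Z σ).mpr h), if_pos h]
  · rw [if_neg (fun h' => h ((isosimp1 Z σ).mp h')), if_neg h]

lemma image2 (σ : Fin 2 → V) : Finset.image σ Finset.univ = {σ 0, σ 1} := by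
  rw [show (Finset.univ : Finset (Fin 2)) = {0, 1} from rfl]
  rw [Finset.image_insert, Finset.image_singleton]

lemma inj2 (σ : Fin 2 → V) : Function.Injective σ ↔ σ 0 ≠ σ 1 := by
  constructor
  · intro h he
    exact absurd (h he) (by decide)
  · intro h i j hij
    fin_cases i <;> fin_cases j
    · rfl
    · exact absurd hij h
    · exact absurd hij.symm h
    · rfl

lemma isosimp2 (Z : SComplex V) (σ : Fin 2 → V) :
    Z.IsOSimp σ ↔ (σ 0 ≠ σ 1 ∧ ({σ 0, σ 1} : Finset V) ∈ Z.faces) := by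
  unfold SComplex.IsOSimp
  rw [image2, inj2]

lemma wt2 (Z : SComplex V) (mZ : Finset V → ℝ) (σ : Fin 2 → V) :
    Z.wt mZ σ = if σ 0 ≠ σ 1 ∧ ({σ 0, σ 1} : Finset V) ∈ Z.faces then mZ {σ 0, σ 1}
      else 0 := by
  unfold SComplex.wt
  rw [image2]
  by_cases h : σ 0 ≠ σ 1 ∧ ({σ 0, σ 1} : Finset V) ∈ Z.faces
  · rw [if_pos ((isosimp2 Z σ).mpr h), if_pos h]
  · rw [if_neg (fun h' => h ((isosimp2 Z σ).mp h')), if_neg h]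

lemma cons_eV (v u : V) : Fin.cons v (eV u) = ![v, u] := by
  funext i
  fin_cases i <;> rfl

lemma dOp1 (φ : (Fin 1 → V) → ℝ) (σ : Fin 2 → V) :
    dOp φ σ = φ (eV (σ 1)) - φ (eV (σ 0)) := by
  unfold dOp
  rw [Fin.sum_univ_two]
  have h0 : σ ∘ (0 : Fin 2).succAbove = eV (σ 1) := by
    funext i
    have : i = 0 := Subsingleton.elim i 0
    subst this; rfl
  have h1 : σ ∘ (1 : Fin 2).succAbove = eV (σ 0) := by
    funext i
    have : i = 0 := Subsingleton.elim i 0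
    subst this; rfl
  rw [h0, h1]
  norm_num
  ring

lemma lapPlus1 (Z : SComplex V) (mZ : Finset V → ℝ) (φ : (Fin 1 → V) → ℝ) (u : V) :
    Z.lapPlus mZ 1 φ (eV u)
      = ∑ v, (if v ≠ u ∧ ({v, u} : Finset V) ∈ Z.faces then mZ {v, u} else 0)
          / (if ({u} : Finset V) ∈ Z.faces then mZ {u} else 0) * (φ (eV u) - φ (eV v)) := by
  unfold SComplex.lapPlus SComplex.deltaOp
  refine Finset.sum_congr rfl fun v _ => ?_
  have hcons : Fin.cons v (eV u) = ![v, u] := cons_eV v u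
  rw [hcons, wt2, wt1, dOp1]
  have h0 : (![v, u] : Fin 2 → V) 0 = v := rfl
  have h1 : (![v, u] : Fin 2 → V) 1 = u := rfl
  rw [h0, h1]
  have h2 : (eV u : Fin 1 → V) 0 = u := rfl
  rw [h2]

lemma lemT (Z : SComplex V) (mZ : Finset V → ℝ)
    (hpos : ∀ t ∈ Z.faces, 0 < mZ t) (μ : ℝ) :
    μ ∈ Z.specLapPlus mZ 1 ↔ ∃ g : V → ℝ, g ≠ 0 ∧
      (∀ u, ({u} : Finset V) ∉ Z.faces → g u = 0) ∧
      (∀ u, ({u} : Finset V) ∈ Z.faces →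
        ∑ v, (if u ≠ v ∧ ({u, v} : Finset V) ∈ Z.faces then mZ {u, v} else 0) * (g u - g v)
          = μ * (mZ {u} * g u)) := by
  have hswap : ∀ u v : V,
      (if v ≠ u ∧ ({v, u} : Finset V) ∈ Z.faces then mZ {v, u} else 0)
        = (if u ≠ v ∧ ({u, v} : Finset V) ∈ Z.faces then mZ {u, v} else 0) := by
    intro u v
    rw [Finset.pair_comm v u]
    congr 1
    simp [ne_comm]
  constructor
  · rintro ⟨φ, hform, hne, heq⟩
    refine ⟨fun u => φ (eV u), ?_, ?_, ?_⟩
    · intro h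
      apply hne
      funext σ
      rw [eV_eq σ]
      exact congrFun h (σ 0)
    · intro u hu
      exact hform.2 (eV u) (fun h => hu ((isosimp1 Z (eV u)).mp h))
    · intro u hu
      have hlap := congrFun heq (eV u)
      rw [lapPlus1] at hlap
      have hsmul : (μ • φ) (eV u) = μ * φ (eV u) := rfl
      rw [hsmul, if_pos hu] at hlap
      have hw : mZ {u} ≠ 0 := (hpos _ hu).ne'
      have := congrArg (· * mZ {u}) hlap
      simp only [Finset.sum_mul] at this
      calc ∑ v, (if u ≠ v ∧ ({u, v} : Finset V) ∈ Z.faces then mZ {u, v} else 0)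
            * (φ (eV u) - φ (eV v))
          = ∑ v, (if v ≠ u ∧ ({v, u} : Finset V) ∈ Z.faces then mZ {v, u} else 0)
            / mZ {u} * (φ (eV u) - φ (eV v)) * mZ {u} := by
            refine Finset.sum_congr rfl fun v _ => ?_
            rw [hswap u v]
            field_simp
        _ = μ * φ (eV u) * mZ {u} := this
        _ = μ * (mZ {u} * φ (eV u)) := by ring
  · rintro ⟨g, hgne, hgsupp, hEV⟩
    refine ⟨fun σ => g (σ 0), ?_, ?_, ?_⟩
    · constructor
      · intro σ π
        have hπ : π = Equiv.refl _ := Equiv.ext fun i => Subsingleton.elim _ _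
        subst hπ
        simp
      · intro σ hσ
        exact hgsupp (σ 0) (fun h => hσ ((isosimp1 Z σ).mpr h))
    · intro h
      apply hgne
      funext u
      exact congrFun h (eV u)
    · funext σ
      rw [eV_eq σ]
      set u := σ 0
      have hev : ∀ τ : Fin 1 → V, (fun σ' : Fin 1 → V => g (σ' 0)) τ = g (τ 0) := fun _ => rfl
      rw [lapPlus1]
      have hsmul : (μ • fun σ' : Fin 1 → V => g (σ' 0)) (eV u) = μ * g u := rfl
      rw [hsmul]
      by_cases hu : ({u} : Finset V) ∈ Z.faces
      · rw [if_pos hu]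
        have hw : mZ {u} ≠ 0 := (hpos _ hu).ne'
        have hEVu := hEV u hu
        have e1 : ∑ v, (if v ≠ u ∧ ({v, u} : Finset V) ∈ Z.faces then mZ {v, u} else 0)
              / mZ {u} * ((fun σ' : Fin 1 → V => g (σ' 0)) (eV u)
                - (fun σ' : Fin 1 → V => g (σ' 0)) (eV v))
            = (∑ v, (if u ≠ v ∧ ({u, v} : Finset V) ∈ Z.faces then mZ {u, v} else 0)
              * (g u - g v)) / mZ {u} := by
          rw [Finset.sum_div]
          refine Finset.sum_congr rfl fun v _ => ?_
          rw [hswap u v]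
          field_simp
          rfl
        rw [e1, hEVu]
        field_simp
      · rw [if_neg hu]
        have : ∀ v : V, (if v ≠ u ∧ ({v, u} : Finset V) ∈ Z.faces then mZ {v, u} else 0)
            / 0 * ((fun σ' : Fin 1 → V => g (σ' 0)) (eV u)
              - (fun σ' : Fin 1 → V => g (σ' 0)) (eV v)) = 0 := by
          intro v
          rw [div_zero, zero_mul]
        rw [Finset.sum_congr rfl fun v _ => this v, Finset.sum_const, smul_zero]
        rw [hgsupp u hu]
        ring

section AuxLink

lemma mem_link_iff (X : SComplex V) (s t : Finset V) :
    t ∈ (X.link s).faces ↔ t = ∅ ∨ (t ∈ X.faces ∧ Disjoint s t ∧ s ∪ t ∈ X.faces) := by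
  unfold SComplex.link
  simp only [Finset.mem_insert, Finset.mem_filter]

lemma vertex_link (X : SComplex V) (s : Finset V) (u : V) :
    ({u} : Finset V) ∈ (X.link s).faces ↔ (u ∉ s ∧ s ∪ {u} ∈ X.faces) := by
  rw [mem_link_iff]
  constructor
  · rintro (h | ⟨h1, h2, h3⟩)
    · exact absurd h (Finset.singleton_ne_empty u)
    · exact ⟨Finset.disjoint_singleton_right.mp h2, h3⟩
  · rintro ⟨h1, h2⟩
    exact Or.inr ⟨X.down_closed _ h2 _ Finset.subset_union_right,
      Finset.disjoint_singleton_right.mpr h1, h2⟩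

lemma pair_link (X : SComplex V) (s : Finset V) (u x : V) :
    ({u, x} : Finset V) ∈ (X.link s).faces
      ↔ (u ∉ s ∧ x ∉ s ∧ s ∪ {u, x} ∈ X.faces) := by
  rw [mem_link_iff]
  constructor
  · rintro (h | ⟨h1, h2, h3⟩)
    · exact absurd h (Finset.insert_ne_empty _ _)
    · rw [Finset.disjoint_insert_right, Finset.disjoint_singleton_right] at h2
      exact ⟨h2.1, h2.2, h3⟩
  · rintro ⟨h1, h2, h3⟩
    refine Or.inr ⟨X.down_closed _ h3 _ Finset.subset_union_right, ?_, h3⟩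
    rw [Finset.disjoint_insert_right, Finset.disjoint_singleton_right]
    exact ⟨h1, h2⟩

lemma triple_link (X : SComplex V) (s : Finset V) (v u x : V) :
    ({v, u, x} : Finset V) ∈ (X.link s).faces
      ↔ (v ∉ s ∧ u ∉ s ∧ x ∉ s ∧ s ∪ {v, u, x} ∈ X.faces) := by
  rw [mem_link_iff]
  constructor
  · rintro (h | ⟨h1, h2, h3⟩)
    · exact absurd h (Finset.insert_ne_empty _ _)
    · rw [Finset.disjoint_insert_right, Finset.disjoint_insert_right,
        Finset.disjoint_singleton_right] at h2
      exact ⟨h2.1, h2.2.1, h2.2.2, h3⟩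
  · rintro ⟨h1, h2, h3, h4⟩
    refine Or.inr ⟨X.down_closed _ h4 _ Finset.subset_union_right, ?_, h4⟩
    rw [Finset.disjoint_insert_right, Finset.disjoint_insert_right,
      Finset.disjoint_singleton_right]
    exact ⟨h1, h2, h3⟩

lemma scomplex_ext {X Y : SComplex V} (h : X.faces = Y.faces) : X = Y := by
  cases X; cases Y; simpa using h

lemma link_link (X : SComplex V) (s : Finset V) (v : V) (hv : v ∉ s) :
    (X.link s).link {v} = X.link (insert v s) := by
  apply scomplex_ext
  ext t
  rw [mem_link_iff (X.link s) {v} t, mem_link_iff X (insert v s) t]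
  by_cases ht : t = ∅
  · simp [ht]
  have hset : insert v s ∪ t = s ∪ ({v} ∪ t) := by
    ext a; simp [Finset.mem_insert, Finset.mem_union]
  constructor
  · rintro (h | ⟨h1, h2, h3⟩)
    · exact Or.inl h
    right
    rw [mem_link_iff] at h1 h3
    rcases h1 with h1 | ⟨ht1, ht2, ht3⟩
    · exact absurd h1 ht
    rcases h3 with h3 | ⟨hu1, hu2, hu3⟩
    · exact absurd h3 (by
        intro he
        have : v ∈ ({v} : Finset V) ∪ t := by simp
        rw [he] at this
        simp at this)
    refine ⟨ht1, ?_, ?_⟩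
    · rw [Finset.insert_eq, Finset.disjoint_union_left]
      exact ⟨h2, ht2⟩
    · rw [hset]; exact hu3
  · rintro (h | ⟨h1, h2, h3⟩)
    · exact Or.inl h
    right
    rw [Finset.insert_eq, Finset.disjoint_union_left] at h2
    have hst : Disjoint s t := h2.2
    have hvt : Disjoint ({v} : Finset V) t := h2.1
    refine ⟨?_, hvt, ?_⟩
    · rw [mem_link_iff]
      refine Or.inr ⟨h1, hst, ?_⟩
      exact X.down_closed _ h3 _ (by
        intro x hx
        rw [hset]
        rcases Finset.mem_union.mp hx with h | h
        · exact Finset.mem_union_left _ h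
        · exact Finset.mem_union_right _ (Finset.mem_union_right _ h))
    · rw [mem_link_iff]
      right
      refine ⟨X.down_closed _ h3 _ (by
          rw [hset]
          exact Finset.subset_union_right), ?_, ?_⟩
      · rw [Finset.disjoint_union_right, Finset.disjoint_singleton_right]
        exact ⟨hv, hst⟩
      · rw [← hset]; exact h3
    
lemma linkWt_link (m : Finset V → ℝ) (s : Finset V) (v : V) :
    linkWt (linkWt m s) {v} = linkWt m (insert v s) := by
  funext t
  show m (s ∪ ({v} ∪ t)) = m (insert v s ∪ t)
  congr 1
  ext a; simp [Finset.mem_insert, Finset.mem_union]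

lemma balance_step (X : SComplex V) (m : Finset V → ℝ) (r : Finset V)
    (hsum : m r = ∑ t ∈ X.faces.filter fun t => r ⊆ t ∧ t.card = r.card + 1, m t) :
    m r = ∑ v, if v ∉ r ∧ insert v r ∈ X.faces then m (insert v r) else 0 := by
  rw [hsum, ← Finset.sum_filter]
  refine (Finset.sum_bij (fun v _ => insert v r) ?_ ?_ ?_ ?_).symm
  · intro v hv
    rw [Finset.mem_filter] at hv ⊢
    obtain ⟨_, hvr, hins⟩ := hv
    exact ⟨hins, Finset.subset_insert v r, by rw [Finset.card_insert_of_notMem hvr]⟩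
  · intro v hv v' hv' he
    rw [Finset.mem_filter] at hv hv'
    have he' : insert v r = insert v' r := he
    have : v ∈ insert v' r := by rw [← he']; exact Finset.mem_insert_self v r
    rcases Finset.mem_insert.mp this with h | h
    · exact h
    · exact absurd h hv.2.1
  · intro t ht
    rw [Finset.mem_filter] at ht
    obtain ⟨ht1, hrt, hcard⟩ := ht
    have hc1 : (t \ r).card = 1 := by
      rw [Finset.card_sdiff_of_subset hrt, hcard]; omega
    obtain ⟨v, hv⟩ := Finset.card_eq_one.mp hc1
    have hvm : v ∈ t \ r := by rw [hv]; exact Finset.mem_singleton_self v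
    rw [Finset.mem_sdiff] at hvm
    have heq : insert v r = t := by
      apply Finset.eq_of_subset_of_card_le
      · exact Finset.insert_subset hvm.1 hrt
      · rw [Finset.card_insert_of_notMem hvm.2, hcard]
    refine ⟨v, ?_, heq⟩
    rw [Finset.mem_filter]
    exact ⟨Finset.mem_univ v, hvm.2, by rw [heq]; exact ht1⟩
  · intro v _
    rfl

end AuxLink

lemma lemA (Y : SComplex V) (mY : Finset V → ℝ) (lam kap : ℝ)
    (hlam : 0 < lam) (hlk : lam ≤ kap)
    (hpos : ∀ t ∈ Y.faces, 0 < mY t)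
    (hb1 : ∀ u, ({u} : Finset V) ∈ Y.faces →
      mY {u} = ∑ v, if u ≠ v ∧ ({u, v} : Finset V) ∈ Y.faces then mY {u, v} else 0)
    (hb2 : ∀ u x, u ≠ x → ({u, x} : Finset V) ∈ Y.faces →
      mY {u, x} = ∑ v, if v ≠ u ∧ v ≠ x ∧ u ≠ x ∧ ({v, u, x} : Finset V) ∈ Y.faces
        then mY {v, u, x} else 0)
    (hlc : ∀ v, ({v} : Finset V) ∈ Y.faces → (Y.link {v}).SkelConnected)
    (hls : ∀ v, ({v} : Finset V) ∈ Y.faces →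
      (Y.link {v}).specLapPlus (linkWt mY {v}) 1 \ {0} ⊆ Set.Icc lam kap) :
    Y.specLapPlus mY 1 \ {0} ⊆ Set.Icc (2 - 1 / lam) (2 - 1 / kap) := by
  classical
  intro μ hμ
  have hμs : μ ∈ Y.specLapPlus mY 1 := hμ.1
  have hμ0 : μ ≠ 0 := by simpa using hμ.2
  obtain ⟨f, hfne, hfsupp, hfEV⟩ := (lemT Y mY hpos μ).mp hμs
  set a : V → V → ℝ := fun u v =>
    if u ≠ v ∧ ({u, v} : Finset V) ∈ Y.faces then mY {u, v} else 0 with ha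
  set c : V → V → V → ℝ := fun v u x =>
    if v ≠ u ∧ v ≠ x ∧ u ≠ x ∧ ({v, u, x} : Finset V) ∈ Y.faces then mY {v, u, x} else 0
    with hcc
  have apos : ∀ u v, 0 ≤ a u v := by
    intro u v; simp only [ha]
    split_ifs with h
    · exact (hpos _ h.2).le
    · exact le_refl 0
  have asym : ∀ u v, a u v = a v u := by
    intro u v; simp only [ha]
    rw [Finset.pair_comm u v]
    refine if_congr ?_ rfl rfl
    exact ⟨fun ⟨h1, h2⟩ => ⟨h1.symm, h2⟩, fun ⟨h1, h2⟩ => ⟨h1.symm, h2⟩⟩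
  have acond : ∀ u v, a u v ≠ 0 → u ≠ v ∧ ({u, v} : Finset V) ∈ Y.faces := by
    intro u v h
    by_contra hcond
    apply h; simp only [ha]; rw [if_neg hcond]
  have aval : ∀ u v, u ≠ v → ({u, v} : Finset V) ∈ Y.faces → a u v = mY {u, v} := by
    intro u v h1 h2; simp only [ha]; rw [if_pos ⟨h1, h2⟩]
  have apos' : ∀ u v, u ≠ v → ({u, v} : Finset V) ∈ Y.faces → 0 < a u v := by
    intro u v h1 h2; rw [aval u v h1 h2]; exact hpos _ h2
  have ccond : ∀ v u x, c v u x ≠ 0 →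
      v ≠ u ∧ v ≠ x ∧ u ≠ x ∧ ({v, u, x} : Finset V) ∈ Y.faces := by
    intro v u x h
    by_contra hcond
    apply h; simp only [hcc]; rw [if_neg hcond]
  have cval : ∀ v u x, (v ≠ u ∧ v ≠ x ∧ u ≠ x ∧ ({v, u, x} : Finset V) ∈ Y.faces) →
      c v u x = mY {v, u, x} := by
    intro v u x h; simp only [hcc]; rw [if_pos h]
  have cpos : ∀ v u x, 0 ≤ c v u x := by
    intro v u x; simp only [hcc]; split_ifs with h
    · exact (hpos _ h.2.2.2).le
    · exact le_refl 0
  have csym : ∀ v u x, c v u x = c v x u := by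
    intro v u x; simp only [hcc]
    have hset : ({v, u, x} : Finset V) = {v, x, u} := by ext b; simp; try tauto
    rw [hset]
    refine if_congr ?_ rfl rfl
    exact ⟨fun ⟨h1, h2, h3, h4⟩ => ⟨h2, h1, h3.symm, h4⟩,
      fun ⟨h1, h2, h3, h4⟩ => ⟨h2, h1, h3.symm, h4⟩⟩
  have csupp : ∀ v u x, c v u x ≠ 0 → a v u ≠ 0 ∧ a v x ≠ 0 := by
    intro v u x h
    obtain ⟨h1, h2, h3, h4⟩ := ccond v u x h
    constructor
    · exact (apos' v u h1 (Y.down_closed _ h4 _ (by intro b hb; simp at hb ⊢; tauto))).ne'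
    · exact (apos' v x h2 (Y.down_closed _ h4 _ (by intro b hb; simp at hb ⊢; tauto))).ne'
  have csum : ∀ u x, (∑ v, c v u x) = a u x := by
    intro u x
    by_cases h : u ≠ x ∧ ({u, x} : Finset V) ∈ Y.faces
    · rw [aval u x h.1 h.2]
      exact (hb2 u x h.1 h.2).symm
    · have h0 : a u x = 0 := by simp only [ha]; rw [if_neg h]
      rw [h0]
      refine Finset.sum_eq_zero fun v _ => ?_
      by_contra hne
      obtain ⟨h1, h2, h3, h4⟩ := ccond v u x hne
      exact h ⟨h3, Y.down_closed _ h4 _ (by intro b hb; simp at hb ⊢; tauto)⟩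
  have adeg : ∀ u, ({u} : Finset V) ∈ Y.faces → mY {u} = ∑ v, a u v := by
    intro u hu
    exact hb1 u hu
  have hfEV' : ∀ u, ({u} : Finset V) ∈ Y.faces →
      ∑ v, a u v * (f u - f v) = μ * (mY {u} * f u) := by
    intro u hu
    exact hfEV u hu
  set N : ℝ := ∑ u, mY {u} * f u ^ 2 with hN
  have hNpos : 0 < N := by
    obtain ⟨u, hu⟩ := Function.ne_iff.mp hfne
    have hPu : ({u} : Finset V) ∈ Y.faces := by
      by_contra h; exact hu (hfsupp u h)
    refine Finset.sum_pos' ?_ ⟨u, Finset.mem_univ u, ?_⟩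
    · intro x _
      by_cases hx : ({x} : Finset V) ∈ Y.faces
      · exact mul_nonneg (hpos _ hx).le (sq_nonneg _)
      · rw [hfsupp x hx]; simp
    · exact mul_pos (hpos _ hPu) (lt_of_le_of_ne (sq_nonneg _) (Ne.symm (pow_ne_zero 2 hu)))
  have hQhalf : ∑ u, ∑ v, a u v * (f u - f v) * f u = μ * N := by
    rw [hN, Finset.mul_sum]
    refine Finset.sum_congr rfl fun u _ => ?_
    by_cases hu : ({u} : Finset V) ∈ Y.faces
    · rw [← Finset.sum_mul, hfEV' u hu]; ring
    · rw [hfsupp u hu]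
      simp
  have hQ : ∑ u, ∑ v, a u v * (f u - f v) ^ 2 = 2 * (μ * N) := by
    rw [← lemD a asym f, hQhalf]
  have hQnn : (0:ℝ) ≤ ∑ u, ∑ v, a u v * (f u - f v) ^ 2 :=
    Finset.sum_nonneg fun u _ => Finset.sum_nonneg fun v _ =>
      mul_nonneg (apos u v) (sq_nonneg _)
  have hμpos : 0 < μ := by
    have h1 : (0:ℝ) ≤ 2 * (μ * N) := by rw [← hQ]; exact hQnn
    have h2 : 0 ≤ μ := by nlinarith
    exact lt_of_le_of_ne h2 (Ne.symm hμ0)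
  set G : V → V → ℝ := fun v u =>
    if v ≠ u ∧ ({v, u} : Finset V) ∈ Y.faces then f u - f v + μ * f v else 0 with hG
  have hGa : ∀ v u, a v u ≠ 0 → G v u = f u - f v + μ * f v := by
    intro v u h
    simp only [hG]; rw [if_pos (acond v u h)]
  have hSL_v : ∀ v, ∑ u, a v u * G v u ^ 2 = ∑ u, a v u * (f u - f v + μ * f v) ^ 2 := by
    intro v
    refine Finset.sum_congr rfl fun u _ => ?_
    by_cases h : a v u = 0
    · rw [h]; ring
    · rw [hGa v u h]
  have hDQ_v : ∀ v, 2 * (∑ u, ∑ x, c v u x * (G v u - G v x) * G v u)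
      = ∑ u, ∑ x, c v u x * (f u - f x) ^ 2 := by
    intro v
    rw [lemD (c v) (csym v) (G v)]
    refine Finset.sum_congr rfl fun u _ => Finset.sum_congr rfl fun x _ => ?_
    by_cases h : c v u x = 0
    · rw [h]; ring
    · obtain ⟨h1, h2⟩ := csupp v u x h
      rw [hGa v u h1, hGa v x h2,
        show f u - f v + μ * f v - (f x - f v + μ * f v) = f u - f x from by ring]
  have horth_v : ∀ v, ({v} : Finset V) ∈ Y.faces → ∑ u, a v u * G v u = 0 := by
    intro v hv
    have e1 : ∑ u, a v u * G v u = ∑ u, a v u * (f u - f v + μ * f v) := by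
      refine Finset.sum_congr rfl fun u _ => ?_
      by_cases h : a v u = 0
      · rw [h]; ring
      · rw [hGa v u h]
    have e2 : ∑ u, a v u * (f u - f v + μ * f v)
        = (∑ u, a v u * (f u - f v)) + μ * f v * (∑ u, a v u) := by
      rw [Finset.mul_sum, ← Finset.sum_add_distrib]
      exact Finset.sum_congr rfl fun u _ => by ring
    have e3 : ∑ u, a v u * (f u - f v) = -(∑ u, a v u * (f v - f u)) := by
      rw [← Finset.sum_neg_distrib]
      exact Finset.sum_congr rfl fun u _ => by ring
    rw [e1, e2, e3, hfEV' v hv, ← adeg v hv]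
    ring
  have hineq_v : ∀ v,
      (∑ u, ∑ x, c v u x * (G v u - G v x) * G v u ≤ kap * ∑ u, a v u * G v u ^ 2)
      ∧ (lam * ∑ u, a v u * G v u ^ 2 ≤ ∑ u, ∑ x, c v u x * (G v u - G v x) * G v u) := by
    intro v
    by_cases hv : ({v} : Finset V) ∈ Y.faces
    · -- apply lemB
      have hBB := lemB (fun u => v ≠ u ∧ ({v, u} : Finset V) ∈ Y.faces)
        (fun u => a v u) (fun u x => c v u x) lam kap hlam hlk
        (fun u hu => apos' v u hu.1 hu.2)
        (csym v) (cpos v)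
        (fun u x h => ⟨acond v u (csupp v u x h).1, acond v x (csupp v u x h).2⟩)
        ?hdeg ?hconn ?hspec
      case hdeg =>
        intro u hu
        show a v u = ∑ x, c v u x
        rw [aval v u hu.1 hu.2, hb2 v u hu.1 hu.2]
        refine Finset.sum_congr rfl fun x _ => ?_
        simp only [hcc]
        have hset2 : ({x, v, u} : Finset V) = {v, u, x} := by ext b; simp; try tauto
        rw [hset2]
        refine if_congr ?_ rfl rfl
        exact ⟨fun ⟨k1, k2, k3, k4⟩ => ⟨k3, k1.symm, k2.symm, k4⟩,
          fun ⟨k1, k2, k3, k4⟩ => ⟨k2.symm, k3.symm, k1, k4⟩⟩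
      case hconn =>
        intro u x hu hx
        have hulink : ({u} : Finset V) ∈ (Y.link {v}).faces := by
          rw [vertex_link]
          refine ⟨by simp [hu.1.symm], ?_⟩
          rw [← Finset.insert_eq]; exact hu.2
        have hxlink : ({x} : Finset V) ∈ (Y.link {v}).faces := by
          rw [vertex_link]
          refine ⟨by simp [hx.1.symm], ?_⟩
          rw [← Finset.insert_eq]; exact hx.2
        have hreach := hlc v hv u x hulink hxlink
        rw [SimpleGraph.reachable_iff_reflTransGen] at hreach
        refine Relation.ReflTransGen.mono ?_ _ _ hreach
        intro p q hpq
        obtain ⟨hne, hmem⟩ := hpq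
        rw [pair_link] at hmem
        obtain ⟨hp, hq, hface⟩ := hmem
        rw [← Finset.insert_eq] at hface
        have hcval : c v p q = mY {v, p, q} :=
          cval v p q ⟨Ne.symm (by simpa using hp), Ne.symm (by simpa using hq), hne, hface⟩
        show c v p q ≠ 0
        rw [hcval]
        exact (hpos _ hface).ne'
      case hspec =>
        intro μ' g hgne hgsupp hgEV
        have hposZ : ∀ t ∈ (Y.link {v}).faces, 0 < linkWt mY {v} t := by
          intro t ht
          rw [mem_link_iff] at ht
          rcases ht with h | ⟨h1, h2, h3⟩
          · subst h
            show 0 < mY ({v} ∪ ∅)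
            rw [Finset.union_empty]; exact hpos _ hv
          · exact hpos _ h3
        have hPZ : ∀ u, (({u} : Finset V) ∈ (Y.link {v}).faces)
            ↔ (v ≠ u ∧ ({v, u} : Finset V) ∈ Y.faces) := by
          intro u
          rw [vertex_link]
          constructor
          · rintro ⟨h1, h2⟩
            rw [← Finset.insert_eq] at h2
            exact ⟨Ne.symm (by simpa using h1), h2⟩
          · rintro ⟨h1, h2⟩
            refine ⟨by simp [h1.symm], ?_⟩
            rw [← Finset.insert_eq]; exact h2
        have hmem := (lemT (Y.link {v}) (linkWt mY {v}) hposZ μ').mpr ⟨g, hgne, ?_, ?_⟩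
        · by_cases h0 : μ' = 0
          · exact Or.inl h0
          · have hIcc := hls v hv ⟨hmem, by simpa using h0⟩
            exact Or.inr (Set.mem_Icc.mp hIcc)
        · intro u hu
          exact hgsupp u (fun hPu => hu ((hPZ u).mpr hPu))
        · intro u hu
          have hPu := (hPZ u).mp hu
          have econv : ∀ x,
              (if u ≠ x ∧ ({u, x} : Finset V) ∈ (Y.link {v}).faces
                then linkWt mY {v} {u, x} else 0) = c v u x := by
            intro x
            simp only [hcc]
            by_cases hcase : v ≠ u ∧ v ≠ x ∧ u ≠ x ∧ ({v, u, x} : Finset V) ∈ Y.faces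
            · rw [if_pos hcase, if_pos ?_]
              · show mY ({v} ∪ {u, x}) = mY {v, u, x}
                rw [← Finset.insert_eq]
              · refine ⟨hcase.2.2.1, ?_⟩
                rw [pair_link]
                refine ⟨by simp [hcase.1.symm], by simp [hcase.2.1.symm], ?_⟩
                rw [← Finset.insert_eq]; exact hcase.2.2.2
            · rw [if_neg hcase, if_neg ?_]
              rintro ⟨k1, k2⟩
              rw [pair_link] at k2
              obtain ⟨k3, k4, k5⟩ := k2
              rw [← Finset.insert_eq] at k5
              exact hcase ⟨Ne.symm (by simpa using k3), Ne.symm (by simpa using k4), k1, k5⟩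
          have hwu : linkWt mY {v} {u} = a v u := by
            show mY ({v} ∪ {u}) = a v u
            rw [← Finset.insert_eq]
            exact (aval v u hPu.1 hPu.2).symm
          rw [Finset.sum_congr rfl fun x _ => by rw [econv x], hwu]
          exact hgEV u hPu
      obtain ⟨hup, hlow⟩ := hBB
      have hGsupp : ∀ u, ¬(v ≠ u ∧ ({v, u} : Finset V) ∈ Y.faces) → G v u = 0 := by
        intro u hu
        simp only [hG]; rw [if_neg hu]
      exact ⟨hup (G v) hGsupp, hlow (G v) hGsupp (horth_v v hv)⟩
    · have hz : ∀ u, a v u = 0 := by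
        intro u
        by_contra h
        exact hv (Y.down_closed _ (acond v u h).2 _ (by simp))
      have hcz : ∀ u x, c v u x = 0 := by
        intro u x
        by_contra h
        exact (csupp v u x h).1 (hz u)
      have hL : ∑ u, ∑ x, c v u x * (G v u - G v x) * G v u = 0 :=
        Finset.sum_eq_zero fun u _ => Finset.sum_eq_zero fun x _ => by rw [hcz u x]; ring
      have hR : ∑ u, a v u * G v u ^ 2 = 0 :=
        Finset.sum_eq_zero fun u _ => by rw [hz u]; ring
      constructor
      · rw [hL, hR]; simp
      · rw [hL, hR]; simp
  set SL : ℝ := ∑ v, ∑ u, a v u * G v u ^ 2 with hSL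
  set SD : ℝ := ∑ v, ∑ u, ∑ x, c v u x * (G v u - G v x) * G v u with hSD
  have hchain1 : SD ≤ kap * SL := by
    rw [hSD, hSL, Finset.mul_sum]
    exact Finset.sum_le_sum fun v _ => (hineq_v v).1
  have hchain2 : lam * SL ≤ SD := by
    rw [hSD, hSL, Finset.mul_sum]
    exact Finset.sum_le_sum fun v _ => (hineq_v v).2
  have hSDval : 2 * SD = 2 * (μ * N) := by
    rw [hSD, Finset.mul_sum, Finset.sum_congr rfl fun v _ => hDQ_v v, ← hQ]
    rw [Finset.sum_comm]
    refine Finset.sum_congr rfl fun u _ => ?_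
    rw [Finset.sum_comm]
    refine Finset.sum_congr rfl fun x _ => ?_
    rw [← Finset.sum_mul, csum u x]
  have hSDval' : SD = μ * N := by linarith
  have hSLv_val : ∀ v, ∑ u, a v u * (f u - f v + μ * f v) ^ 2
      = (∑ u, a v u * (f u - f v) ^ 2) - μ ^ 2 * (mY {v} * f v ^ 2) := by
    intro v
    by_cases hv : ({v} : Finset V) ∈ Y.faces
    · have e1 : ∀ u : V, a v u * (f u - f v + μ * f v) ^ 2
          = a v u * (f u - f v) ^ 2 + 2 * μ * f v * (a v u * (f u - f v))
            + μ ^ 2 * f v ^ 2 * a v u := by intro u; ring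
      rw [Finset.sum_congr rfl fun u _ => e1 u]
      rw [Finset.sum_add_distrib, Finset.sum_add_distrib, ← Finset.mul_sum, ← Finset.mul_sum]
      have e3 : ∑ u, a v u * (f u - f v) = -(μ * (mY {v} * f v)) := by
        have e3a : ∑ u, a v u * (f u - f v) = -(∑ u, a v u * (f v - f u)) := by
          rw [← Finset.sum_neg_distrib]
          exact Finset.sum_congr rfl fun u _ => by ring
        rw [e3a, hfEV' v hv]
      rw [e3, ← adeg v hv]
      ring
    · have hz : ∀ u, a v u = 0 := by
        intro u
        by_contra h
        exact hv (Y.down_closed _ (acond v u h).2 _ (by simp))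
      have hfv : f v = 0 := hfsupp v hv
      have l1 : ∑ u, a v u * (f u - f v + μ * f v) ^ 2 = 0 :=
        Finset.sum_eq_zero fun u _ => by rw [hz u]; ring
      have l2 : ∑ u, a v u * (f u - f v) ^ 2 = 0 :=
        Finset.sum_eq_zero fun u _ => by rw [hz u]; ring
      rw [l1, l2, hfv]; ring
  have hSLval : SL = 2 * (μ * N) - μ ^ 2 * N := by
    rw [hSL, Finset.sum_congr rfl fun v _ => (hSL_v v).trans (hSLv_val v)]
    rw [Finset.sum_sub_distrib]
    congr 1
    · rw [← hQ]
      exact Finset.sum_congr rfl fun v _ => Finset.sum_congr rfl fun u _ => by ring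
    · rw [hN, Finset.mul_sum]
  have hkap : 0 < kap := lt_of_lt_of_le hlam hlk
  have hμN : 0 < μ * N := mul_pos hμpos hNpos
  have hfin1 : lam * (2 * (μ * N) - μ ^ 2 * N) ≤ μ * N := by
    rw [← hSLval, ← hSDval']; exact hchain2
  have hfin2 : μ * N ≤ kap * (2 * (μ * N) - μ ^ 2 * N) := by
    rw [← hSLval, ← hSDval']; exact hchain1
  refine Set.mem_Icc.mpr ⟨?_, ?_⟩
  · have h1 : lam * (2 - μ) * (μ * N) ≤ 1 * (μ * N) := by
      calc lam * (2 - μ) * (μ * N) = lam * (2 * (μ * N) - μ ^ 2 * N) := by ring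
        _ ≤ μ * N := hfin1
        _ = 1 * (μ * N) := by ring
    have h2 : lam * (2 - μ) ≤ 1 := le_of_mul_le_mul_right h1 hμN
    have h3 : 2 - μ ≤ 1 / lam := by rw [le_div_iff₀ hlam]; linarith
    linarith
  · have h1 : 1 * (μ * N) ≤ kap * (2 - μ) * (μ * N) := by
      calc 1 * (μ * N) = μ * N := by ring
        _ ≤ kap * (2 * (μ * N) - μ ^ 2 * N) := hfin2
        _ = kap * (2 - μ) * (μ * N) := by ring
    have h2 : 1 ≤ kap * (2 - μ) := le_of_mul_le_mul_right h1 hμN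
    have h3 : 1 / kap ≤ 2 - μ := by rw [div_le_iff₀ hkap]; linarith
    linarith

/-- Lemma 4.1: one-step descent of the two-sided spectral gap. -/
theorem one_step_descent_of_spectral_gaps
    (X : SComplex V) (n : ℕ) (m : Finset V → ℝ)
    (hn : 1 < n) (hpure : X.Pure n) (hm : X.IsBalanced n m)
    (hconn : X.AllLinksConnected n)
    (k : ℕ) (hk : k ≤ n - 2)
    (lam kap : ℝ) (hlam : 0 < lam) (hlk : lam ≤ kap)
    (hspec : ∀ σ : Fin (k + 1) → V, X.IsOSimp σ →
      (X.link (Finset.image σ Finset.univ)).specLapPlus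
          (linkWt m (Finset.image σ Finset.univ)) 1 \ {0} ⊆ Set.Icc lam kap) :
    ∀ τ : Fin k → V, X.IsOSimp τ →
      (X.link (Finset.image τ Finset.univ)).specLapPlus
          (linkWt m (Finset.image τ Finset.univ)) 1 \ {0} ⊆
        Set.Icc (2 - 1 / lam) (2 - 1 / kap) := by
  intro τ hτ
  classical
  set s : Finset V := Finset.image τ Finset.univ with hs
  have hsf : s ∈ X.faces := hτ.2
  have hcards : s.card = k := by
    rw [hs, Finset.card_image_of_injective _ hτ.1, Finset.card_univ, Fintype.card_fin]
  have hk2 : k + 2 ≤ n := by omega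
  apply lemA (X.link s) (linkWt m s) lam kap hlam hlk
  · -- positivity
    intro t ht
    rw [mem_link_iff] at ht
    rcases ht with h | ⟨h1, h2, h3⟩
    · subst h
      show 0 < m (s ∪ ∅)
      rw [Finset.union_empty]
      exact hm.1 s hsf
    · exact hm.1 _ h3
  · -- vertex balance
    intro u hu
    rw [vertex_link] at hu
    obtain ⟨hus, huf⟩ := hu
    have hins : s ∪ {u} = insert u s := by ext b; simp; try tauto
    have hrcard : (s ∪ {u}).card = k + 1 := by
      rw [hins, Finset.card_insert_of_notMem hus, hcards]
    have hbal := balance_step X m (s ∪ {u}) (hm.2 _ huf (by rw [hrcard]; omega))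
    show m (s ∪ {u}) = _
    rw [hbal]
    refine Finset.sum_congr rfl fun v _ => ?_
    have hsets : insert v (s ∪ {u}) = s ∪ {u, v} := by ext b; simp; try tauto
    rw [hsets]
    refine if_congr ?_ rfl rfl
    rw [pair_link]
    constructor
    · rintro ⟨h1, h2⟩
      simp only [Finset.mem_union, Finset.mem_singleton] at h1
      push_neg at h1
      exact ⟨Ne.symm h1.2, hus, h1.1, h2⟩
    · rintro ⟨h1, h2, h3, h4⟩
      refine ⟨?_, h4⟩
      simp only [Finset.mem_union, Finset.mem_singleton]
      push_neg
      exact ⟨h3, Ne.symm h1⟩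
  · -- edge balance
    intro u x hux hpx
    rw [pair_link] at hpx
    obtain ⟨hus, hxs, hfx⟩ := hpx
    have h1 : s ∪ {u, x} = insert u (insert x s) := by ext b; simp; try tauto
    have hrcard : (s ∪ {u, x}).card = k + 2 := by
      rw [h1, Finset.card_insert_of_notMem, Finset.card_insert_of_notMem hxs, hcards]
      simp [hus, hux]
    have hbal := balance_step X m (s ∪ {u, x}) (hm.2 _ hfx (by rw [hrcard]; omega))
    show m (s ∪ {u, x}) = _
    rw [hbal]
    refine Finset.sum_congr rfl fun v _ => ?_
    have hsets : insert v (s ∪ {u, x}) = s ∪ {v, u, x} := by ext b; simp; try tauto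
    rw [hsets]
    refine if_congr ?_ rfl rfl
    rw [triple_link]
    constructor
    · rintro ⟨h1, h2⟩
      simp only [Finset.mem_union, Finset.mem_insert, Finset.mem_singleton] at h1
      push_neg at h1
      exact ⟨h1.2.1, h1.2.2, hux, h1.1, hus, hxs, h2⟩
    · rintro ⟨h1, h2, h3, h4, h5, h6, h7⟩
      refine ⟨?_, h7⟩
      simp only [Finset.mem_union, Finset.mem_insert, Finset.mem_singleton]
      push_neg
      exact ⟨h4, h1, h2⟩
  · -- connectivity of vertex links
    intro v hv
    rw [vertex_link] at hv
    obtain ⟨hvs, hvf⟩ := hv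
    rw [link_link X s v hvs]
    have hins : insert v s ∈ X.faces := by
      rw [Finset.insert_eq, Finset.union_comm]; exact hvf
    exact hconn.2 (insert v s) hins
      (by rw [Finset.card_insert_of_notMem hvs, hcards]; omega)
  · -- spectral gap of vertex links
    intro v hv
    rw [vertex_link] at hv
    obtain ⟨hvs, hvf⟩ := hv
    rw [link_link X s v hvs, linkWt_link m s v]
    have hins : insert v s ∈ X.faces := by
      rw [Finset.insert_eq, Finset.union_comm]; exact hvf
    have himg : Finset.image (Fin.cons v τ : Fin (k + 1) → V) Finset.univ = insert v s := by
      ext b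
      constructor
      · intro hb
        obtain ⟨i, _, hi⟩ := Finset.mem_image.mp hb
        rcases Fin.eq_zero_or_eq_succ i with h0 | ⟨j, hj⟩
        · subst h0
          rw [Fin.cons_zero] at hi
          rw [← hi]
          exact Finset.mem_insert_self v s
        · subst hj
          rw [Fin.cons_succ] at hi
          refine Finset.mem_insert_of_mem ?_
          rw [hs]
          exact Finset.mem_image.mpr ⟨j, Finset.mem_univ j, hi⟩
      · intro hb
        rcases Finset.mem_insert.mp hb with h | h
        · exact Finset.mem_image.mpr ⟨0, Finset.mem_univ _, by rw [Fin.cons_zero, h]⟩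
        · rw [hs] at h
          obtain ⟨j, _, hj⟩ := Finset.mem_image.mp h
          exact Finset.mem_image.mpr ⟨j.succ, Finset.mem_univ _, by rw [Fin.cons_succ]; exact hj⟩
    have hOS : X.IsOSimp (Fin.cons v τ) := by
      constructor
      · rw [Fin.cons_injective_iff]
        refine ⟨?_, hτ.1⟩
        intro hr
        obtain ⟨i, hi⟩ := hr
        apply hvs
        rw [hs]
        exact Finset.mem_image.mpr ⟨i, Finset.mem_univ i, hi⟩
      · rw [himg]; exact hins
    have hsp := hspec (Fin.cons v τ) hOS
    rwa [himg] at hsp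
end

section
/- Let X be a finite pure n-dimensional weighted simplicial complex which is (n+1)-partite with sides S_0,…,S_n. Then for every 0 ≤ k ≤ n, every 0 ≤ j ≤ n, and every φ ∈ C^k(X,ℝ): k! ⟨Δ^−_{(k,j)} φ, φ⟩ = Σ_{τ ∈ Σ(k−1)} ⟨Δ^−_{τ,(0,j)} φ_τ, φ_τ⟩, where the inner products on the right-hand side are taken in the links X_τ. -/
open Finset

variable {V : Type} [Fintype V] [DecidableEq V]

namespace SComplex

variable (X : SComplex V) (m : Finset V → ℝ)

lemma wt_comp_perm {j : ℕ} (σ : Fin j → V) (e : Equiv.Perm (Fin j)) :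
    X.wt m (σ ∘ ⇑e) = X.wt m σ := by
  have himg : Finset.image (σ ∘ ⇑e) Finset.univ = Finset.image σ Finset.univ := by
    rw [← Finset.image_image, Finset.image_univ_equiv]
  have hio : X.IsOSimp (σ ∘ ⇑e) ↔ X.IsOSimp σ := by
    unfold IsOSimp
    rw [himg, Equiv.injective_comp]
  unfold wt
  rw [himg]
  simp only [hio]

lemma isOSimp_tail {k : ℕ} {v : V} {τ : Fin k → V} (h : X.IsOSimp (Fin.cons v τ)) :
    X.IsOSimp τ := by
  obtain ⟨hinj, hface⟩ := h
  refine ⟨fun a b hab => ?_, X.down_closed _ hface _ ?_⟩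
  · have : (Fin.cons v τ : Fin (k+1) → V) a.succ = (Fin.cons v τ : Fin (k+1) → V) b.succ := by
      simpa [Fin.cons_succ] using hab
    exact Fin.succ_injective _ (hinj this)
  · intro x hx
    simp only [Finset.mem_image, Finset.mem_univ, true_and] at hx ⊢
    obtain ⟨i, rfl⟩ := hx
    exact ⟨i.succ, by simp⟩

lemma insertNth_eq_cons_comp {k : ℕ} (i : Fin (k + 1)) (v : V) (τ : Fin k → V) :
    i.insertNth v τ = Fin.cons v τ ∘ ⇑(Fin.cycleRange i) := by
  funext j
  refine Fin.succAboveCases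
    (α := fun j => i.insertNth (α := fun _ => V) v τ j
      = (Fin.cons v τ ∘ ⇑(Fin.cycleRange i)) j) i ?_ ?_ j
  · simp [Fin.cycleRange_self]
  · intro j'
    simp [Fin.cycleRange_succAbove]

lemma form_insertNth {k : ℕ} {φ : (Fin (k + 1) → V) → ℝ} (hφ : X.IsForm (k + 1) φ)
    (i : Fin (k + 1)) (v : V) (τ : Fin k → V) :
    φ (i.insertNth v τ) = (-1 : ℝ) ^ (i : ℕ) * φ (Fin.cons v τ) := by
  rw [insertNth_eq_cons_comp, hφ.1 (Fin.cons v τ) (Fin.cycleRange i), Fin.sign_cycleRange]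
  push_cast
  ring

lemma sum_wt_cons (hpos : ∀ s ∈ X.faces, 0 < m s) {k : ℕ} (S : Finset V)
    (φ : (Fin (k + 1) → V) → ℝ) (τ : Fin k → V) :
    ∑ v ∈ S, X.wt m (Fin.cons v τ) * φ (Fin.cons v τ) =
      X.wt m τ * X.deltaSide m S φ τ := by
  unfold deltaSide
  rw [Finset.mul_sum]
  refine Finset.sum_congr rfl fun v _ => ?_
  by_cases h : X.IsOSimp τ
  · have hwt : X.wt m τ ≠ 0 := by
      unfold wt
      rw [if_pos h]
      exact (hpos _ h.2).ne'
    field_simp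
  · have h1 : X.wt m τ = 0 := by unfold wt; rw [if_neg h]
    have h2 : X.wt m (Fin.cons v τ) = 0 := by
      unfold wt; rw [if_neg (fun hc => h (X.isOSimp_tail hc))]
    rw [h1, h2]
    ring

lemma lhs_formula (hpos : ∀ s ∈ X.faces, 0 < m s) {k : ℕ} (S : Finset V)
    (φ : (Fin (k + 1) → V) → ℝ) (hφ : X.IsForm (k + 1) φ) :
    (Nat.factorial k : ℝ) * X.innerF m (k + 1) (X.lapMinusSide m S k φ) φ =
      ∑ τ : Fin k → V, X.wt m τ * (X.deltaSide m S φ τ) ^ 2 := by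
  have step1 : X.innerF m (k + 1) (X.lapMinusSide m S k φ) φ =
      ∑ σ : Fin (k + 1) → V, ∑ i : Fin (k + 1),
        (if σ i ∈ S then
          X.wt m σ / (Nat.factorial (k + 1) : ℝ) *
            ((-1 : ℝ) ^ (i : ℕ) * X.deltaSide m S φ (σ ∘ i.succAbove) * φ σ) else 0) := by
    unfold innerF lapMinusSide dSide
    refine Finset.sum_congr rfl fun σ _ => ?_
    rw [Finset.sum_mul, Finset.mul_sum]
    refine Finset.sum_congr rfl fun i _ => ?_
    split <;> ring
  have step2 : ∀ i : Fin (k + 1),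
      (∑ σ : Fin (k + 1) → V, if σ i ∈ S then
          X.wt m σ / (Nat.factorial (k + 1) : ℝ) *
            ((-1 : ℝ) ^ (i : ℕ) * X.deltaSide m S φ (σ ∘ i.succAbove) * φ σ) else 0) =
      ∑ p : V × (Fin k → V), (if p.1 ∈ S then
          X.wt m (Fin.cons p.1 p.2) / (Nat.factorial (k + 1) : ℝ) *
            (X.deltaSide m S φ p.2 * φ (Fin.cons p.1 p.2)) else 0) := by
    intro i
    refine (Fintype.sum_equiv (Fin.insertNthEquiv (fun _ => V) i) _ _ fun p => ?_).symm
    obtain ⟨v, τ⟩ := p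
    have h1 : (Fin.insertNthEquiv (fun _ => V) i) (v, τ) = i.insertNth v τ := rfl
    have h2 : i.insertNth (α := fun _ => V) v τ i = v := by simp
    have h3 : (i.insertNth (α := fun _ => V) v τ) ∘ i.succAbove = τ := by
      funext j; simp
    have h4 : X.wt m (i.insertNth v τ) = X.wt m (Fin.cons v τ) := by
      rw [insertNth_eq_cons_comp]; exact X.wt_comp_perm m _ _
    have h5 : φ (i.insertNth v τ) = (-1 : ℝ) ^ (i : ℕ) * φ (Fin.cons v τ) :=
      X.form_insertNth hφ i v τ
    have hsq : (-1 : ℝ) ^ (i : ℕ) * (-1 : ℝ) ^ (i : ℕ) = 1 := by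
      rw [← pow_add]; exact Even.neg_one_pow ⟨(i : ℕ), rfl⟩
    rw [h1, h2, h3, h4, h5]
    split_ifs with hv
    · linear_combination (-(X.wt m (Fin.cons v τ) / (Nat.factorial (k + 1) : ℝ) *
        (X.deltaSide m S φ τ * φ (Fin.cons v τ)))) * hsq
    · rfl
  have key : ∀ τ : Fin k → V,
      (∑ v : V, if v ∈ S then X.wt m (Fin.cons v τ) / (Nat.factorial (k + 1) : ℝ) *
          (X.deltaSide m S φ τ * φ (Fin.cons v τ)) else 0) =
      X.wt m τ * (X.deltaSide m S φ τ) ^ 2 / (Nat.factorial (k + 1) : ℝ) := by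
    intro τ
    rw [Finset.sum_ite_mem, Finset.univ_inter]
    have hc : ∀ v ∈ S, X.wt m (Fin.cons v τ) / (Nat.factorial (k + 1) : ℝ) *
        (X.deltaSide m S φ τ * φ (Fin.cons v τ)) =
        X.deltaSide m S φ τ / (Nat.factorial (k + 1) : ℝ) *
          (X.wt m (Fin.cons v τ) * φ (Fin.cons v τ)) := by
      intro v _
      ring
    rw [Finset.sum_congr rfl hc, ← Finset.mul_sum, X.sum_wt_cons m hpos S φ τ]
    ring
  rw [step1, Finset.sum_comm]
  calc (Nat.factorial k : ℝ) * ∑ i : Fin (k + 1), ∑ σ : Fin (k + 1) → V,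
        (if σ i ∈ S then
          X.wt m σ / (Nat.factorial (k + 1) : ℝ) *
            ((-1 : ℝ) ^ (i : ℕ) * X.deltaSide m S φ (σ ∘ i.succAbove) * φ σ) else 0)
      = (Nat.factorial k : ℝ) * ∑ i : Fin (k + 1), ∑ p : V × (Fin k → V),
        (if p.1 ∈ S then
          X.wt m (Fin.cons p.1 p.2) / (Nat.factorial (k + 1) : ℝ) *
            (X.deltaSide m S φ p.2 * φ (Fin.cons p.1 p.2)) else 0) := by
        rw [Finset.sum_congr rfl fun i _ => step2 i]
    _ = (Nat.factorial k : ℝ) * ((k + 1 : ℝ) * ∑ p : V × (Fin k → V),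
        (if p.1 ∈ S then
          X.wt m (Fin.cons p.1 p.2) / (Nat.factorial (k + 1) : ℝ) *
            (X.deltaSide m S φ p.2 * φ (Fin.cons p.1 p.2)) else 0)) := by
        rw [Finset.sum_const, Finset.card_univ, Fintype.card_fin, nsmul_eq_mul]
        push_cast
        ring
    _ = (Nat.factorial k : ℝ) * ((k + 1 : ℝ) * ∑ τ : Fin k → V,
          X.wt m τ * (X.deltaSide m S φ τ) ^ 2 / (Nat.factorial (k + 1) : ℝ)) := by
        rw [Fintype.sum_prod_type, Finset.sum_comm]
        rw [Finset.sum_congr rfl fun τ _ => key τ]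
    _ = ∑ τ : Fin k → V, X.wt m τ * (X.deltaSide m S φ τ) ^ 2 := by
        rw [Finset.mul_sum, Finset.mul_sum]
        refine Finset.sum_congr rfl fun τ _ => ?_
        have hfact : ((Nat.factorial (k + 1) : ℕ) : ℝ) =
            (k + 1 : ℝ) * (Nat.factorial k : ℝ) := by
          rw [Nat.factorial_succ]; push_cast; ring
        have h1 : (Nat.factorial k : ℝ) ≠ 0 := by
          exact_mod_cast Nat.factorial_ne_zero k
        have h2 : (k + 1 : ℝ) ≠ 0 := by positivity
        rw [hfact]
        field_simp

lemma image_cons {k : ℕ} (v : V) (τ : Fin k → V) :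
    Finset.image (Fin.cons v τ : Fin (k + 1) → V) Finset.univ =
      insert v (Finset.image τ Finset.univ) := by
  ext x
  simp only [Finset.mem_image, Finset.mem_univ, true_and, Finset.mem_insert]
  constructor
  · rintro ⟨i, rfl⟩
    induction i using Fin.cases with
    | zero => exact Or.inl (by simp)
    | succ i => exact Or.inr ⟨i, by simp⟩
  · rintro (rfl | ⟨i, rfl⟩)
    · exact ⟨0, by simp⟩
    · exact ⟨i.succ, by simp⟩

lemma link_wt_one {k : ℕ} {τ : Fin k → V} (hτ : X.IsOSimp τ) (g : Fin 1 → V) :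
    (X.link (Finset.image τ Finset.univ)).wt (linkWt m (Finset.image τ Finset.univ)) g =
      X.wt m (Fin.cons (g 0) τ) := by
  set s := Finset.image τ Finset.univ with hs
  have himg1 : Finset.image g Finset.univ = {g 0} := by
    rw [Finset.univ_unique, Finset.image_singleton]
    rfl
  have hmem : {g 0} ∈ (X.link s).faces ↔ g 0 ∉ s ∧ insert (g 0) s ∈ X.faces := by
    unfold link
    simp only [Finset.mem_insert, Finset.mem_filter]
    constructor
    · rintro (h | ⟨h1, h2, h3⟩)
      · exact absurd h (Finset.singleton_ne_empty _)
      · refine ⟨Finset.disjoint_singleton_right.mp h2, ?_⟩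
        rwa [Finset.union_comm, ← Finset.insert_eq] at h3
    · rintro ⟨h1, h2⟩
      refine Or.inr ⟨X.down_closed _ h2 _ (Finset.singleton_subset_iff.mpr
        (Finset.mem_insert_self _ _)), Finset.disjoint_singleton_right.mpr h1, ?_⟩
      rwa [Finset.insert_eq, Finset.union_comm] at h2
  have hio : (X.link s).IsOSimp g ↔ X.IsOSimp (Fin.cons (g 0) τ) := by
    unfold IsOSimp
    rw [himg1, image_cons, Fin.cons_injective_iff, hmem]
    have hinjg : Function.Injective g := fun a b _ => Subsingleton.elim a b
    have hr : g 0 ∉ Set.range τ ↔ g 0 ∉ s := by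
      rw [hs]
      simp
    constructor
    · rintro ⟨-, h1, h2⟩
      exact ⟨⟨hr.mpr h1, hτ.1⟩, h2⟩
    · rintro ⟨⟨h1, -⟩, h2⟩
      exact ⟨hinjg, hr.mp h1, h2⟩
  unfold wt
  split_ifs with h1 h2 h2
  · rw [himg1, image_cons]
    unfold linkWt
    rw [Finset.union_comm, ← Finset.insert_eq]
  · exact absurd (hio.mp h1) h2
  · exact absurd (hio.mpr h2) h1
  · rfl

lemma localize_eq {k : ℕ} {φ : (Fin (k + 1) → V) → ℝ} (hφ : X.IsForm (k + 1) φ)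
    (τ : Fin k → V) (g : Fin 1 → V) :
    localize φ τ g = (-1 : ℝ) ^ k * φ (Fin.cons (g 0) τ) := by
  unfold localize
  rw [Fin.append_right_eq_snoc, ← Fin.insertNth_last', X.form_insertNth hφ]
  simp

lemma rhs_pointwise (hpos : ∀ s ∈ X.faces, 0 < m s) (S : Finset V) {k : ℕ}
    (φ : (Fin (k + 1) → V) → ℝ) (hφ : X.IsForm (k + 1) φ) (τ : Fin k → V) :
    (if X.IsOSimp τ then
        (X.link (Finset.image τ Finset.univ)).innerF
          (linkWt m (Finset.image τ Finset.univ)) 1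
          ((X.link (Finset.image τ Finset.univ)).lapMinusSide
            (linkWt m (Finset.image τ Finset.univ)) S 0 (localize φ τ))
          (localize φ τ)
      else 0) = X.wt m τ * (X.deltaSide m S φ τ) ^ 2 := by
  by_cases hτ : X.IsOSimp τ
  swap
  · rw [if_neg hτ]
    have h1 : X.wt m τ = 0 := by unfold wt; rw [if_neg hτ]
    rw [h1, zero_mul]
  rw [if_pos hτ]
  set s := Finset.image τ Finset.univ with hs
  have hms : (0 : ℝ) < m s := hpos _ hτ.2
  have hwtτ : X.wt m τ = m s := by unfold wt; rw [if_pos hτ]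
  have hwt0 : ∀ e : Fin 0 → V, (X.link s).wt (linkWt m s) e = m s := by
    intro e
    have himg : Finset.image e Finset.univ = (∅ : Finset V) := by simp
    unfold wt
    rw [if_pos ⟨fun a b _ => Subsingleton.elim a b, by rw [himg]; exact (X.link s).empty_mem⟩]
    rw [himg]
    unfold linkWt
    rw [Finset.union_empty]
  have hsqk : (-1 : ℝ) ^ k * (-1 : ℝ) ^ k = 1 := by
    rw [← pow_add]; exact Even.neg_one_pow ⟨k, rfl⟩
  have hdelta : ∀ e : Fin 0 → V,
      (X.link s).deltaSide (linkWt m s) S (localize φ τ) e =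
        (-1 : ℝ) ^ k * X.deltaSide m S φ τ := by
    intro e
    unfold deltaSide
    have hc : ∀ v ∈ S,
        (X.link s).wt (linkWt m s) (Fin.cons v e) / (X.link s).wt (linkWt m s) e *
          localize φ τ (Fin.cons v e) =
        (-1 : ℝ) ^ k * (X.wt m (Fin.cons v τ) * φ (Fin.cons v τ)) / m s := by
      intro v _
      rw [hwt0, X.link_wt_one m hτ (Fin.cons v e), X.localize_eq hφ]
      simp only [Fin.cons_zero]
      ring
    rw [Finset.sum_congr rfl hc, ← Finset.sum_div, ← Finset.mul_sum,
      X.sum_wt_cons m hpos S φ τ, hwtτ, mul_div_assoc,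
      mul_div_cancel_left₀ _ hms.ne']
    congr 1
    unfold deltaSide
    rw [hwtτ]
  have hterm : ∀ u : Fin 1 → V,
      (X.link s).wt (linkWt m s) u / (Nat.factorial 1 : ℝ) *
        ((X.link s).lapMinusSide (linkWt m s) S 0 (localize φ τ) u * localize φ τ u) =
      (if u 0 ∈ S then
        X.wt m (Fin.cons (u 0) τ) * (X.deltaSide m S φ τ * φ (Fin.cons (u 0) τ)) else 0) := by
    intro u
    unfold lapMinusSide dSide
    rw [Fin.sum_univ_one, hdelta, X.link_wt_one m hτ u, X.localize_eq hφ]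
    simp only [Nat.factorial_one, Nat.cast_one, div_one, Fin.val_zero, pow_zero, one_mul]
    split_ifs with hv
    · linear_combination (X.wt m (Fin.cons (u 0) τ) * (X.deltaSide m S φ τ *
        φ (Fin.cons (u 0) τ))) * hsqk
    · ring
  unfold innerF
  rw [Finset.sum_congr rfl fun u _ => hterm u]
  rw [Fintype.sum_equiv (Equiv.funUnique (Fin 1) V) _
    (fun x : V => if x ∈ S then
        X.wt m (Fin.cons x τ) * (X.deltaSide m S φ τ * φ (Fin.cons x τ)) else 0)
    (fun u => by rw [show (Equiv.funUnique (Fin 1) V) u = u 0 from rfl])]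
  rw [Finset.sum_ite_mem, Finset.univ_inter]
  have hc2 : ∀ v ∈ S, X.wt m (Fin.cons v τ) * (X.deltaSide m S φ τ * φ (Fin.cons v τ)) =
      X.deltaSide m S φ τ * (X.wt m (Fin.cons v τ) * φ (Fin.cons v τ)) := fun v _ => by ring
  rw [Finset.sum_congr rfl hc2, ← Finset.mul_sum, X.sum_wt_cons m hpos S φ τ]
  ring

end SComplex
open SComplex
/-- Proposition 3.9: localization of the side lower Laplacians in a partite
complex: `k!⟨Δ⁻_{(k,j)}φ,φ⟩ = ∑_{τ∈Σ(k-1)} ⟨Δ⁻_{τ,(0,j)}φ_τ,φ_τ⟩`. -/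
theorem partite_localization_of_side_laplacian
    (X : SComplex V) (n : ℕ) (m : Finset V → ℝ) (S : Fin (n + 1) → Finset V)
    (hpure : X.Pure n) (hm : X.IsBalanced n m) (hpart : X.IsPartition n S)
    (k : ℕ) (hk : k ≤ n) (j : Fin (n + 1))
    (φ : (Fin (k + 1) → V) → ℝ) (hφ : X.IsForm (k + 1) φ) :
    (Nat.factorial k : ℝ) * X.innerF m (k + 1) (X.lapMinusSide m (S j) k φ) φ =
      X.sumOSimp k fun τ =>
        (X.link (Finset.image τ Finset.univ)).innerF
          (linkWt m (Finset.image τ Finset.univ)) 1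
          ((X.link (Finset.image τ Finset.univ)).lapMinusSide
            (linkWt m (Finset.image τ Finset.univ)) (S j) 0 (localize φ τ))
          (localize φ τ) := by
  obtain ⟨hpos, -⟩ := hm
  rw [X.lhs_formula m hpos (S j) φ hφ]
  unfold sumOSimp
  exact (Finset.sum_congr rfl fun τ _ => X.rhs_pointwise m hpos (S j) φ hφ τ).symm
end
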